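/- Let E be a countable amplified directed graph. Define Ē⁰ := {H ∈ ℋ_vert : H ⊆ H₀ and H ⊄ lt₁(H₀)}, Ē¹ := {(H, n, K) : H, K ∈ Ē⁰, lt₁(K) ⊆ H, n ∈ ℕ}, and maps s̄, r̄ : Ē¹ → Ē⁰ by s̄(H, n, K) = H and r̄(H, n, K) = K. Then Ē := (Ē⁰, Ē¹, r̄, s̄) is a countable amplified directed graph, and there is an isomorphism of directed graphs E ≅ Ē whose vertex map carries each v ∈ E⁰ to H(v, 0), the hereditary subset of (E ×₁ ℤ)⁰ generated by (v, 0). -/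

import Mathlib

/-- A directed graph: a set of vertices, a set of edges, and range and source maps. -/
structure DirGraph where
  V : Type
  E : Type
  r : E → V
  s : E → V

namespace DirGraph

variable (G : DirGraph)

/-- The skew-product graph `E ×₁ ℤ`. -/
def skew : DirGraph where
  V := G.V × ℤ
  E := G.E × ℤ
  r := fun e => (G.r e.1, e.2 + 1)
  s := fun e => (G.s e.1, e.2)

/-- `G.PathRel v w n` : there is a path of length `n` from `v` to `w`
(vertices are paths of length `0`). -/
inductive PathRel : G.V → G.V → ℕ → Prop
  | nil (v : G.V) : PathRel v v 0
  | cons (e : G.E) {w : G.V} {n : ℕ} : PathRel (G.r e) w n → PathRel (G.s e) w (n + 1)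

/-- A set of vertices is hereditary if it contains the range of every edge whose
source it contains. -/
def Hereditary (H : Set G.V) : Prop := ∀ e : G.E, G.s e ∈ H → G.r e ∈ H

/-- `H(v, n)`: the smallest hereditary subset of `(E ×₁ ℤ)⁰` containing `(v, n)`. -/
def Hgen (v : G.V) (n : ℤ) : Set (G.V × ℤ) :=
  ⋂₀ {K : Set (G.V × ℤ) | G.skew.Hereditary K ∧ (v, n) ∈ K}

/-- The translation action `lt_k(H) = {(v, n + k) : (v, n) ∈ H}`. -/
def lt (k : ℤ) (H : Set (G.V × ℤ)) : Set (G.V × ℤ) :=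
  (fun p : G.V × ℤ => (p.1, p.2 + k)) '' H

/-- The hereditary set `H₀ = {(v, n) : v ∈ E⁰, n ≥ 0}`. -/
def H0 : Set (G.V × ℤ) := {p | 0 ≤ p.2}

/-- A graph is amplified if for all vertices `v, w` the set `vE¹w` of edges from `v`
to `w` is empty or infinite. -/
def Amplified : Prop :=
  ∀ v w : G.V, {e : G.E | G.s e = v ∧ G.r e = w} = ∅ ∨ {e : G.E | G.s e = v ∧ G.r e = w}.Infinite

/-- A graph is connected if the smallest equivalence relation on the vertices containing
`{(s e, r e) : e ∈ E¹}` is everything. -/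
def Connected : Prop :=
  ∀ v w : G.V, Relation.EqvGen (fun a b => ∃ e : G.E, G.s e = a ∧ G.r e = b) v w

/-- `L` has a unique predecessor in the poset of hereditary subsets of `(E ×₁ ℤ)⁰`. -/
def UniquePred (L : Set (G.V × ℤ)) : Prop :=
  ∃ K : Set (G.V × ℤ), G.skew.Hereditary K ∧ K ⊂ L ∧
    ∀ K' : Set (G.V × ℤ), G.skew.Hereditary K' → K' ⊂ L → K' ⊆ K

/-- `ℋ_vert`: the hereditary subsets of `(E ×₁ ℤ)⁰` having a unique predecessor. -/
def HVert : Set (Set (G.V × ℤ)) := {L | G.skew.Hereditary L ∧ G.UniquePred L}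

/-- `V₀ = {H(v, 0) : v ∈ E⁰}`. -/
def V0 : Set (Set (G.V × ℤ)) := {L | ∃ v : G.V, L = G.Hgen v 0}


theorem lt_hereditary (k : ℤ) {H : Set (G.V × ℤ)}
    (hH : G.skew.Hereditary H) : G.skew.Hereditary (G.lt k H) := by
  rintro ⟨f, m⟩ hs
  obtain ⟨⟨v, n⟩, hvn, heq⟩ := hs
  have h1 : v = G.s f := congrArg Prod.fst heq
  have h2 : n + k = m := congrArg Prod.snd heq
  subst h1
  refine ⟨(G.r f, n + 1), hH (f, n) hvn, ?_⟩
  show ((G.r f : G.V), n + 1 + k) = (G.r f, m + 1)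
  rw [Prod.ext_iff]
  exact ⟨rfl, by omega⟩

theorem H0_hereditary : G.skew.Hereditary G.H0 := by
  rintro ⟨f, m⟩ hm
  have : 0 ≤ m := hm
  show 0 ≤ m + 1
  omega

/-- The hereditary subsets of the skew-product graph, as a type. -/
def HS := {L : Set (G.V × ℤ) // G.skew.Hereditary L}

/-- Translation on hereditary subsets of the skew product. -/
def ltH (k : ℤ) (A : G.HS) : G.HS := ⟨G.lt k A.1, G.lt_hereditary k A.2⟩

/-- `H₀` as an element of `G.HS`. -/
def H0H : G.HS := ⟨G.H0, G.H0_hereditary⟩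

/-- The vertex set `Ē⁰` of the graph recovered from `(ℋ(E ×₁ ℤ), ⊆, lt, H₀)`. -/
def Ebar0 : Set (Set (G.V × ℤ)) := {L | L ∈ G.HVert ∧ L ⊆ G.H0 ∧ ¬ L ⊆ G.lt 1 G.H0}

/-- The graph `Ē` recovered from `(ℋ(E ×₁ ℤ), ⊆, lt, H₀)`. -/
noncomputable def Ebar : DirGraph where
  V := G.Ebar0
  E := {t : Set (G.V × ℤ) × ℕ × Set (G.V × ℤ) //
          t.1 ∈ G.Ebar0 ∧ t.2.2 ∈ G.Ebar0 ∧ G.lt 1 t.2.2 ⊆ t.1}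
  s := fun t => ⟨t.1.1, t.2.1⟩
  r := fun t => ⟨t.1.2.2, t.2.2.1⟩

end DirGraph

namespace DirGraph

variable (G : DirGraph)

theorem pathRel_trans {v w u : G.V} {k l : ℕ} (h1 : G.PathRel v w k) :
    G.PathRel w u l → G.PathRel v u (l + k) := by
  induction h1 with
  | nil v => exact fun h => h
  | cons e _ ih => exact fun h => PathRel.cons e (ih h)

theorem pathRel_snoc {v : G.V} {k : ℕ} (e : G.E) (h : G.PathRel v (G.s e) k) :
    G.PathRel v (G.r e) (k + 1) := by
  have h2 := G.pathRel_trans h (PathRel.cons e (PathRel.nil (G.r e)))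
  convert h2 using 1
  omega

theorem path_mono {v w : G.V} {k : ℕ} (h : G.PathRel v w k) :
    ∀ (n : ℤ) (K : Set (G.V × ℤ)), G.skew.Hereditary K → (v, n) ∈ K → (w, n + k) ∈ K := by
  induction h with
  | nil v => intro n K _ hv; simpa using hv
  | @cons e w' n' h ih =>
    intro n K hK hv
    have h1 : ((G.r e, n + 1) : G.V × ℤ) ∈ K := hK (e, n) hv
    have h2 := ih (n + 1) K hK h1
    have heq : (n : ℤ) + ((n' + 1 : ℕ) : ℤ) = (n + 1) + (n' : ℕ) := by push_cast; ring
    rw [heq]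
    exact h2

theorem mem_Hgen_iff {v w : G.V} {n m : ℤ} :
    (w, m) ∈ G.Hgen v n ↔ ∃ k : ℕ, m = n + k ∧ G.PathRel v w k := by
  constructor
  · intro h
    refine Set.mem_sInter.mp h {p : G.V × ℤ | ∃ k : ℕ, p.2 = n + k ∧ G.PathRel v p.1 k}
      ⟨?_, ⟨0, by simp, PathRel.nil v⟩⟩
    rintro ⟨f, j⟩ hf
    obtain ⟨k, hk, hp⟩ := hf
    have hk' : j = n + k := hk
    refine ⟨k + 1, ?_, G.pathRel_snoc f hp⟩
    show j + 1 = n + ((k + 1 : ℕ) : ℤ)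
    push_cast
    omega
  · rintro ⟨k, rfl, hp⟩
    exact Set.mem_sInter.mpr fun K hK => G.path_mono hp n K hK.1 hK.2

theorem hgen_hereditary (v : G.V) (n : ℤ) : G.skew.Hereditary (G.Hgen v n) := by
  intro f hf
  have hf : ∀ t ∈ {K : Set (G.V × ℤ) | G.skew.Hereditary K ∧ (v, n) ∈ K}, G.skew.s f ∈ t :=
    Set.mem_sInter.mp hf
  refine Set.mem_sInter.mpr ?_
  exact fun K hK => hK.1 f (hf K hK)

theorem mem_hgen_self (v : G.V) (n : ℤ) : (v, n) ∈ G.Hgen v n :=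
  (G.mem_Hgen_iff).mpr ⟨0, by simp, PathRel.nil v⟩

theorem hgen_subset {v : G.V} {n : ℤ} {K : Set (G.V × ℤ)} (hK : G.skew.Hereditary K)
    (h : (v, n) ∈ K) : G.Hgen v n ⊆ K := Set.sInter_subset_of_mem ⟨hK, h⟩

theorem pathRel_zero {v w : G.V} (h : G.PathRel v w 0) : w = v := by
  cases h; rfl

theorem pathRel_one {v w : G.V} (h : G.PathRel v w 1) :
    ∃ e : G.E, G.s e = v ∧ G.r e = w := by
  cases h with
  | cons e h' => exact ⟨e, rfl, (G.pathRel_zero h').symm⟩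

theorem mem_lt_iff {k : ℤ} {H : Set (G.V × ℤ)} {p : G.V × ℤ} :
    p ∈ G.lt k H ↔ (p.1, p.2 - k) ∈ H := by
  constructor
  · rintro ⟨⟨a, b⟩, hq, rfl⟩
    simpa using hq
  · intro h
    exact ⟨(p.1, p.2 - k), h, by simp⟩

theorem lt_one_hgen (v : G.V) (n : ℤ) : G.lt 1 (G.Hgen v n) = G.Hgen v (n + 1) := by
  ext ⟨w, m⟩
  rw [G.mem_lt_iff, G.mem_Hgen_iff, G.mem_Hgen_iff]
  constructor
  · rintro ⟨k, hk, hp⟩; exact ⟨k, by omega, hp⟩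
  · rintro ⟨k, hk, hp⟩; exact ⟨k, by omega, hp⟩

theorem mem_lt_one_H0 {p : G.V × ℤ} : p ∈ G.lt 1 G.H0 ↔ 1 ≤ p.2 := by
  rw [G.mem_lt_iff]
  show 0 ≤ p.2 - 1 ↔ _
  omega

theorem hgen_subset_H0 (v : G.V) : G.Hgen v 0 ⊆ G.H0 := by
  rintro ⟨w, m⟩ h
  obtain ⟨k, hk, -⟩ := G.mem_Hgen_iff.mp h
  show (0 : ℤ) ≤ m
  omega

theorem hgen_eq_of_level {v w : G.V} {n : ℤ} (h : (w, n) ∈ G.Hgen v n) : w = v := by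
  obtain ⟨k, hk, hp⟩ := G.mem_Hgen_iff.mp h
  have hk0 : k = 0 := by omega
  subst hk0
  exact G.pathRel_zero hp

theorem hgen_inj {v w : G.V} (h : G.Hgen v 0 = G.Hgen w 0) : v = w := by
  have hm : (w, (0 : ℤ)) ∈ G.Hgen v 0 := by rw [h]; exact G.mem_hgen_self w 0
  exact (G.hgen_eq_of_level hm).symm

theorem hgen_mem_Ebar0 (v : G.V) : G.Hgen v 0 ∈ G.Ebar0 := by
  refine ⟨⟨G.hgen_hereditary v 0, {p | p ∈ G.Hgen v 0 ∧ 1 ≤ p.2}, ?_, ?_, ?_⟩,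
    G.hgen_subset_H0 v, ?_⟩
  · rintro ⟨f, j⟩ ⟨h1, h2⟩
    refine ⟨G.hgen_hereditary v 0 (f, j) h1, ?_⟩
    have hj : (1 : ℤ) ≤ j := h2
    show (1 : ℤ) ≤ j + 1
    omega
  · refine HasSubset.Subset.ssubset_of_ne (fun p hp => hp.1) ?_
    intro heq
    have hmem : (v, (0 : ℤ)) ∈ {p : G.V × ℤ | p ∈ G.Hgen v 0 ∧ 1 ≤ p.2} := by
      rw [heq]; exact G.mem_hgen_self v 0
    have : (1 : ℤ) ≤ 0 := hmem.2
    omega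
  · intro K' hK' hK'sub p hp
    have hpH : p ∈ G.Hgen v 0 := hK'sub.subset hp
    refine ⟨hpH, ?_⟩
    by_contra hlt
    push_neg at hlt
    obtain ⟨w, m⟩ := p
    obtain ⟨k, hk, hpath⟩ := G.mem_Hgen_iff.mp hpH
    have hm : m = 0 := by
      have : (1:ℤ) > m := hlt
      omega
    subst hm
    have hk0 : k = 0 := by omega
    subst hk0
    have hwv : w = v := G.pathRel_zero hpath
    subst hwv
    exact hK'sub.not_subset (G.hgen_subset hK' hp)
  · intro hsub
    have h1 := G.mem_lt_one_H0.mp (hsub (G.mem_hgen_self v 0))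
    have : (1 : ℤ) ≤ 0 := h1
    omega

theorem ebar0_eq_hgen {L : Set (G.V × ℤ)} (hL : L ∈ G.Ebar0) : ∃ v, L = G.Hgen v 0 := by
  obtain ⟨⟨hher, K, hKher, hKL, hKmax⟩, hH0, hnot⟩ := hL
  obtain ⟨p, hpL, hpnot⟩ := Set.not_subset.mp hnot
  obtain ⟨w, m⟩ := p
  have hm0 : (0 : ℤ) ≤ m := hH0 hpL
  have hm1 : ¬ (1 : ℤ) ≤ m := fun h => hpnot (G.mem_lt_one_H0.mpr h)
  have hm : m = 0 := by omega
  subst hm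
  have hex : ∃ q ∈ L, G.Hgen q.1 q.2 = L := by
    by_contra hno
    push_neg at hno
    have hLK : L ⊆ K := by
      intro q hq
      have hsub : G.Hgen q.1 q.2 ⊆ L := G.hgen_subset hher hq
      have hss : G.Hgen q.1 q.2 ⊂ L := hsub.ssubset_of_ne (hno q hq)
      exact hKmax _ (G.hgen_hereditary _ _) hss (G.mem_hgen_self q.1 q.2)
    exact hKL.not_subset hLK
  obtain ⟨⟨u, j⟩, huL, hEq⟩ := hex
  have hj0 : (0 : ℤ) ≤ j := hH0 huL
  have hw : (w, (0 : ℤ)) ∈ G.Hgen u j := by rw [hEq]; exact hpL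
  obtain ⟨k, hk, -⟩ := G.mem_Hgen_iff.mp hw
  have hj : j = 0 := by omega
  subst hj
  exact ⟨u, hEq.symm⟩

theorem edge_iff {v w : G.V} :
    G.lt 1 (G.Hgen w 0) ⊆ G.Hgen v 0 ↔ ∃ e : G.E, G.s e = v ∧ G.r e = w := by
  rw [G.lt_one_hgen]
  constructor
  · intro h
    have hm := h (G.mem_hgen_self w (0 + 1))
    obtain ⟨k, hk, hp⟩ := G.mem_Hgen_iff.mp hm
    have hk1 : k = 1 := by omega
    subst hk1
    exact G.pathRel_one hp
  · rintro ⟨e, rfl, rfl⟩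
    apply G.hgen_subset (G.hgen_hereditary _ _)
    exact G.mem_Hgen_iff.mpr ⟨1, by norm_num, PathRel.cons e (PathRel.nil _)⟩

noncomputable def phi0 : G.V ≃ G.Ebar.V :=
  Equiv.ofBijective (fun v => ⟨G.Hgen v 0, G.hgen_mem_Ebar0 v⟩)
    ⟨fun v w h => G.hgen_inj (congrArg Subtype.val h),
     fun b => by
       obtain ⟨v, hv⟩ := G.ebar0_eq_hgen b.2
       exact ⟨v, Subtype.ext hv.symm⟩⟩

theorem ebar_pair_eq_iff (t : G.Ebar.E) (p : G.V × G.V) :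
    (G.phi0.symm (G.Ebar.s t), G.phi0.symm (G.Ebar.r t)) = p ↔
      t.1.1 = G.Hgen p.1 0 ∧ t.1.2.2 = G.Hgen p.2 0 := by
  rw [Prod.ext_iff]
  constructor
  · rintro ⟨h1, h2⟩
    have hs := (Equiv.symm_apply_eq G.phi0).mp h1
    have hr := (Equiv.symm_apply_eq G.phi0).mp h2
    exact ⟨congrArg Subtype.val hs, congrArg Subtype.val hr⟩
  · rintro ⟨h1, h2⟩
    exact ⟨(Equiv.symm_apply_eq G.phi0).mpr (Subtype.ext h1),
           (Equiv.symm_apply_eq G.phi0).mpr (Subtype.ext h2)⟩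

noncomputable def psi [Countable G.E] (hG : G.Amplified) (p : G.V × G.V) :
    {e : G.E // (G.s e, G.r e) = p} ≃
      {t : G.Ebar.E // (G.phi0.symm (G.Ebar.s t), G.phi0.symm (G.Ebar.r t)) = p} := by
  classical
  by_cases hp : ∃ e : G.E, G.s e = p.1 ∧ G.r e = p.2
  · have hSinf : {e : G.E | G.s e = p.1 ∧ G.r e = p.2}.Infinite := by
      rcases hG p.1 p.2 with h | h
      · exfalso
        obtain ⟨e, he⟩ := hp
        rw [Set.eq_empty_iff_forall_notMem] at h
        exact h e he
      · exact h
    haveI : Infinite {e : G.E // G.s e = p.1 ∧ G.r e = p.2} :=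
      Set.infinite_coe_iff.mpr hSinf
    have eq1 : {e : G.E // (G.s e, G.r e) = p} ≃ {e : G.E // G.s e = p.1 ∧ G.r e = p.2} :=
      Equiv.subtypeEquivRight (fun e => by rw [Prod.ext_iff])
    haveI : Infinite {e : G.E // (G.s e, G.r e) = p} := Infinite.of_injective _ eq1.symm.injective
    have d : Denumerable {e : G.E // (G.s e, G.r e) = p} :=
      Classical.choice (nonempty_denumerable _)
    have eN : {e : G.E // (G.s e, G.r e) = p} ≃ ℕ := @Denumerable.eqv _ d
    refine eN.trans ?_
    have hsub : G.lt 1 (G.Hgen p.2 0) ⊆ G.Hgen p.1 0 := (G.edge_iff).mpr hp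
    exact
      { toFun := fun n =>
          ⟨⟨(G.Hgen p.1 0, n, G.Hgen p.2 0),
            G.hgen_mem_Ebar0 p.1, G.hgen_mem_Ebar0 p.2, hsub⟩,
            (G.ebar_pair_eq_iff _ p).mpr ⟨rfl, rfl⟩⟩
        invFun := fun t => t.1.1.2.1
        left_inv := fun n => rfl
        right_inv := fun t => by
          obtain ⟨h1, h2⟩ := (G.ebar_pair_eq_iff t.1 p).mp t.2
          apply Subtype.ext
          apply Subtype.ext
          show (G.Hgen p.1 0, t.1.1.2.1, G.Hgen p.2 0) = t.1.1
          rw [← h1, ← h2] }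
  · haveI h1 : IsEmpty {e : G.E // (G.s e, G.r e) = p} := by
      constructor
      rintro ⟨e, he⟩
      exact hp ⟨e, (Prod.ext_iff.mp he).1, (Prod.ext_iff.mp he).2⟩
    haveI h2 : IsEmpty
        {t : G.Ebar.E // (G.phi0.symm (G.Ebar.s t), G.phi0.symm (G.Ebar.r t)) = p} := by
      constructor
      rintro ⟨t, ht⟩
      obtain ⟨hs, hr⟩ := (G.ebar_pair_eq_iff t p).mp ht
      have hcond := t.2.2.2
      rw [hs, hr] at hcond
      exact hp ((G.edge_iff).mp hcond)
    exact Equiv.equivOfIsEmpty _ _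

noncomputable def phi1 [Countable G.E] (hG : G.Amplified) : G.E ≃ G.Ebar.E :=
  (Equiv.sigmaFiberEquiv fun e => (G.s e, G.r e)).symm.trans
    ((Equiv.sigmaCongrRight (G.psi hG)).trans
      (Equiv.sigmaFiberEquiv fun t : G.Ebar.E =>
        (G.phi0.symm (G.Ebar.s t), G.phi0.symm (G.Ebar.r t))))

theorem phi1_prop [Countable G.E] (hG : G.Amplified) (e : G.E) :
    G.Ebar.s (G.phi1 hG e) = G.phi0 (G.s e) ∧ G.Ebar.r (G.phi1 hG e) = G.phi0 (G.r e) := by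
  have h : G.phi1 hG e = (G.psi hG (G.s e, G.r e) ⟨e, rfl⟩).1 := rfl
  have h2 := (G.psi hG (G.s e, G.r e) ⟨e, rfl⟩).2
  rw [G.ebar_pair_eq_iff] at h2
  obtain ⟨hs, hr⟩ := h2
  constructor
  · rw [h]; exact Subtype.ext hs
  · rw [h]; exact Subtype.ext hr

theorem ebar_amplified : G.Ebar.Amplified := by
  intro H K
  by_cases hc : G.lt 1 K.1 ⊆ H.1
  · right
    apply Set.infinite_of_injective_forall_mem
      (f := fun n : ℕ => (⟨(H.1, n, K.1), H.2, K.2, hc⟩ : G.Ebar.E))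
    · intro n m hnm
      exact congrArg (fun t : G.Ebar.E => t.1.2.1) hnm
    · intro n
      exact ⟨Subtype.ext rfl, Subtype.ext rfl⟩
  · left
    rw [Set.eq_empty_iff_forall_notMem]
    rintro t ⟨hs, hr⟩
    apply hc
    have h1 : t.1.1 = H.1 := congrArg Subtype.val hs
    have h2 : t.1.2.2 = K.1 := congrArg Subtype.val hr
    have hcond := t.2.2.2
    rw [h1, h2] at hcond
    exact hcond

end DirGraph

open DirGraph

theorem ebar_iso (G : DirGraph) [Countable G.V] [Countable G.E] (hG : G.Amplified) :
    Countable G.Ebar.V ∧ Countable G.Ebar.E ∧ G.Ebar.Amplified ∧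
      ∃ (φ₀ : G.V ≃ G.Ebar.V) (φ₁ : G.E ≃ G.Ebar.E),
        (∀ e : G.E, φ₀ (G.r e) = G.Ebar.r (φ₁ e)) ∧
        (∀ e : G.E, φ₀ (G.s e) = G.Ebar.s (φ₁ e)) ∧
        ∀ v : G.V, (φ₀ v).1 = G.Hgen v 0 := by
  refine ⟨Countable.of_equiv G.V G.phi0, Countable.of_equiv G.E (G.phi1 hG),
    G.ebar_amplified, G.phi0, G.phi1 hG, ?_, ?_, fun v => rfl⟩
  · exact fun e => ((G.phi1_prop hG e).2).symm
  · exact fun e => ((G.phi1_prop hG e).1).symm
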